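/- arXiv:1810.01552 — 2 statements merged into one kernel-verified Lean document; each statement's English description precedes it below -/
import Mathlib

section
/- For 0 < r < 1, the curve θ ↦ -log(1 - r e^{2πiθ}) for θ ∈ [0,1), viewed in the complex plane, is a closed curve whose image bounds a convex region; equivalently, the image of the map θ ↦ 1 - r e^{2πiθ} under w ↦ -log w is the boundary of a convex subset of ℂ. -/
open Set

namespace BJaux

noncomputable def g (r u : ℝ) : ℝ := (Real.exp (-u) + (1 - r ^ 2) * Real.exp u) / 2

noncomputable def K (r : ℝ) : Set ℂ :=
  {z : ℂ | |z.im| ≤ Real.pi / 2 ∧ g r z.re ≤ Real.cos z.im}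

noncomputable def E (r : ℝ) : Set ℂ :=
  {z : ℂ | |z.im| < Real.pi / 2 ∧ g r z.re = Real.cos z.im}

lemma mem_K {r : ℝ} {z : ℂ} :
    z ∈ K r ↔ |z.im| ≤ Real.pi / 2 ∧ g r z.re ≤ Real.cos z.im := Iff.rfl

lemma mem_E {r : ℝ} {z : ℂ} :
    z ∈ E r ↔ |z.im| < Real.pi / 2 ∧ g r z.re = Real.cos z.im := Iff.rfl

lemma g_pos {r : ℝ} (hr : 0 < r) (hr1 : r < 1) (u : ℝ) : 0 < g r u := by
  have h1 : 0 < Real.exp (-u) := Real.exp_pos _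
  have h2 : 0 < (1 - r ^ 2) * Real.exp u := by
    apply mul_pos _ (Real.exp_pos _); nlinarith
  unfold g; linarith

lemma g_convex {r : ℝ} (hr : 0 < r) (hr1 : r < 1) {x y a b : ℝ} (ha : 0 ≤ a) (hb : 0 ≤ b)
    (hab : a + b = 1) : g r (a * x + b * y) ≤ a * g r x + b * g r y := by
  have hcc : (0:ℝ) ≤ 1 - r ^ 2 := by nlinarith
  have h1 := convexOn_exp.2 (Set.mem_univ (-x)) (Set.mem_univ (-y)) ha hb hab
  have h2 := convexOn_exp.2 (Set.mem_univ x) (Set.mem_univ y) ha hb hab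
  simp only [smul_eq_mul] at h1 h2
  have hx : a * -x + b * -y = -(a * x + b * y) := by ring
  rw [hx] at h1
  unfold g
  nlinarith [mul_le_mul_of_nonneg_left h2 hcc]

lemma cos_concave {x y a b : ℝ} (hx : |x| ≤ Real.pi / 2) (hy : |y| ≤ Real.pi / 2)
    (ha : 0 ≤ a) (hb : 0 ≤ b) (hab : a + b = 1) :
    a * Real.cos x + b * Real.cos y ≤ Real.cos (a * x + b * y) := by
  have hx' : x ∈ Set.Icc (-(Real.pi / 2)) (Real.pi / 2) := by
    rw [Set.mem_Icc]; constructor <;> [linarith [neg_abs_le x]; linarith [le_abs_self x]]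
  have hy' : y ∈ Set.Icc (-(Real.pi / 2)) (Real.pi / 2) := by
    rw [Set.mem_Icc]; constructor <;> [linarith [neg_abs_le y]; linarith [le_abs_self y]]
  have := strictConcaveOn_cos_Icc.concaveOn.2 hx' hy' ha hb hab
  simpa [smul_eq_mul] using this

lemma g_cont (r : ℝ) : Continuous fun z : ℂ => g r z.re := by
  unfold g
  exact ((Real.continuous_exp.comp Complex.continuous_re.neg).add
    (continuous_const.mul (Real.continuous_exp.comp Complex.continuous_re))).div_const 2

lemma K_convex {r : ℝ} (hr : 0 < r) (hr1 : r < 1) : Convex ℝ (K r) := by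
  intro z₁ h₁ z₂ h₂ a b ha hb hab
  rw [mem_K] at h₁ h₂
  obtain ⟨h₁i, h₁g⟩ := h₁
  obtain ⟨h₂i, h₂g⟩ := h₂
  have hre : (a • z₁ + b • z₂).re = a * z₁.re + b * z₂.re := by
    simp [Complex.add_re, Complex.smul_re, smul_eq_mul]
  have him : (a • z₁ + b • z₂).im = a * z₁.im + b * z₂.im := by
    simp [Complex.add_im, Complex.smul_im, smul_eq_mul]
  rw [mem_K]
  constructor
  · rw [him]
    calc |a * z₁.im + b * z₂.im| ≤ |a * z₁.im| + |b * z₂.im| := abs_add_le _ _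
      _ = a * |z₁.im| + b * |z₂.im| := by rw [abs_mul, abs_mul, abs_of_nonneg ha, abs_of_nonneg hb]
      _ ≤ a * (Real.pi / 2) + b * (Real.pi / 2) := by gcongr
      _ = Real.pi / 2 := by rw [← add_mul, hab, one_mul]
  · rw [hre, him]
    calc g r (a * z₁.re + b * z₂.re) ≤ a * g r z₁.re + b * g r z₂.re :=
          g_convex hr hr1 ha hb hab
      _ ≤ a * Real.cos z₁.im + b * Real.cos z₂.im := by gcongr
      _ ≤ Real.cos (a * z₁.im + b * z₂.im) := cos_concave h₁i h₂i ha hb hab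

lemma K_closed (r : ℝ) : IsClosed (K r) := by
  have : K r = {z : ℂ | |z.im| ≤ Real.pi / 2} ∩ {z : ℂ | g r z.re ≤ Real.cos z.im} := rfl
  rw [this]
  exact (isClosed_le (continuous_abs.comp Complex.continuous_im) continuous_const).inter
    (isClosed_le (g_cont r) (Real.continuous_cos.comp Complex.continuous_im))

lemma K_compact {r : ℝ} (hr : 0 < r) (hr1 : r < 1) : IsCompact (K r) := by
  rw [Metric.isCompact_iff_isClosed_bounded]
  refine ⟨K_closed r, ?_⟩
  rw [Metric.isBounded_iff_subset_closedBall 0]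
  refine ⟨Real.log 2 + Real.log (2 / (1 - r ^ 2)) + Real.pi, fun z hz => ?_⟩
  rw [mem_K] at hz
  obtain ⟨hi, hg⟩ := hz
  have hc : Real.cos z.im ≤ 1 := Real.cos_le_one _
  have hgle : g r z.re ≤ 1 := le_trans hg hc
  have hcpos : (0:ℝ) < 1 - r ^ 2 := by nlinarith
  have h1 : Real.exp (-z.re) ≤ 2 := by
    have h2 : 0 ≤ (1 - r ^ 2) * Real.exp z.re := by positivity
    unfold g at hgle; linarith
  have h2 : Real.exp z.re ≤ 2 / (1 - r ^ 2) := by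
    have h3 : 0 < Real.exp (-z.re) := Real.exp_pos _
    have : (1 - r ^ 2) * Real.exp z.re ≤ 2 := by unfold g at hgle; linarith
    rw [le_div_iff₀ hcpos]; linarith
  have hb1 : -z.re ≤ Real.log 2 := by
    rw [← Real.log_exp (-z.re)]; exact Real.log_le_log (Real.exp_pos _) h1
  have hb2 : z.re ≤ Real.log (2 / (1 - r ^ 2)) := by
    rw [← Real.log_exp z.re]; exact Real.log_le_log (Real.exp_pos _) h2
  have hlog2 : (0:ℝ) ≤ Real.log 2 := Real.log_nonneg (by norm_num)
  have hlog2' : (0:ℝ) ≤ Real.log (2 / (1 - r ^ 2)) := by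
    apply Real.log_nonneg
    rw [le_div_iff₀ hcpos]; nlinarith
  have habs : |z.re| ≤ Real.log 2 + Real.log (2 / (1 - r ^ 2)) := by
    rcases abs_cases z.re with ⟨h, _⟩ | ⟨h, _⟩ <;> rw [h] <;> linarith
  simp only [Metric.mem_closedBall, dist_zero_right]
  calc ‖z‖ ≤ |z.re| + |z.im| := Complex.norm_le_abs_re_add_abs_im z
    _ ≤ (Real.log 2 + Real.log (2 / (1 - r ^ 2))) + Real.pi := by
        have : |z.im| ≤ Real.pi := le_trans hi (by linarith [Real.pi_pos])
        linarith
    _ = Real.log 2 + Real.log (2 / (1 - r ^ 2)) + Real.pi := by ring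

lemma U_open (r : ℝ) : IsOpen {z : ℂ | |z.im| < Real.pi / 2 ∧ g r z.re < Real.cos z.im} := by
  have : {z : ℂ | |z.im| < Real.pi / 2 ∧ g r z.re < Real.cos z.im}
      = {z : ℂ | |z.im| < Real.pi / 2} ∩ {z : ℂ | g r z.re < Real.cos z.im} := rfl
  rw [this]
  exact (isOpen_lt (continuous_abs.comp Complex.continuous_im) continuous_const).inter
    (isOpen_lt (g_cont r) (Real.continuous_cos.comp Complex.continuous_im))

lemma E_subset_frontier {r : ℝ} (hr : 0 < r) (hr1 : r < 1) : E r ⊆ frontier (K r) := by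
  intro p hp
  rw [mem_E] at hp
  obtain ⟨hpi, hpg⟩ := hp
  have hpK : p ∈ K r := mem_K.mpr ⟨hpi.le, hpg.le⟩
  rw [(K_closed r).frontier_eq]
  refine ⟨hpK, fun hint => ?_⟩
  have hp0 : p ≠ 0 := by
    intro h
    rw [h] at hpg
    simp only [Complex.zero_re, Complex.zero_im, Real.cos_zero] at hpg
    unfold g at hpg
    rw [neg_zero, Real.exp_zero] at hpg
    nlinarith
  obtain ⟨ε, hε, hball⟩ := Metric.mem_nhds_iff.mp (mem_interior_iff_mem_nhds.mp hint)
  have habs : 0 < ‖p‖ := norm_pos_iff.mpr hp0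
  set t : ℝ := ε / (2 * ‖p‖) with ht
  have htpos : 0 < t := by positivity
  set p' : ℂ := (1 + t) • p with hp'
  have hp'K : p' ∈ K r := by
    apply hball
    rw [Metric.mem_ball, hp']
    have hdiff : (1 + t) • p - p = t • p := by
      rw [add_smul, one_smul]; abel
    rw [dist_eq_norm, hdiff, norm_smul, Real.norm_eq_abs, abs_of_pos htpos]
    have h5 : t * ‖p‖ = ε / 2 := by
      rw [ht]; field_simp
    rw [h5]; linarith
  rw [mem_K] at hp'K
  obtain ⟨hp'i, hp'g⟩ := hp'K
  set a : ℝ := 1 / (1 + t) with hadef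
  set b : ℝ := t / (1 + t) with hbdef
  have h1t : (0:ℝ) < 1 + t := by linarith
  have hapos : 0 < a := by positivity
  have hbpos : 0 < b := by positivity
  have hab : a + b = 1 := by rw [hadef, hbdef]; field_simp
  have hre : p.re = a * p'.re + b * 0 := by
    rw [hp', Complex.smul_re, smul_eq_mul, hadef]
    field_simp
    simp
  have him : p.im = a * p'.im + b * 0 := by
    rw [hp', Complex.smul_im, smul_eq_mul, hadef]
    field_simp
    simp
  have hg0 : g r 0 = 1 - r ^ 2 / 2 := by
    unfold g; rw [neg_zero, Real.exp_zero]; ring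
  have hgi : g r p.re ≤ a * g r p'.re + b * g r 0 := by
    rw [hre]; exact g_convex hr hr1 hapos.le hbpos.le hab
  have hci : a * Real.cos p'.im + b * Real.cos 0 ≤ Real.cos p.im := by
    rw [him]
    exact cos_concave hp'i (by rw [abs_zero]; positivity) hapos.le hbpos.le hab
  rw [Real.cos_zero] at hci
  rw [hg0] at hgi
  have hmono : a * g r p'.re ≤ a * Real.cos p'.im :=
    mul_le_mul_of_nonneg_left hp'g hapos.le
  nlinarith [mul_pos hbpos (pow_pos hr 2)]

lemma frontier_subset_E {r : ℝ} (hr : 0 < r) (hr1 : r < 1) : frontier (K r) ⊆ E r := by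
  intro p hp
  rw [(K_closed r).frontier_eq] at hp
  obtain ⟨hpK, hpint⟩ := hp
  rw [mem_K] at hpK
  obtain ⟨hpi, hpg⟩ := hpK
  have hU : p ∉ {z : ℂ | |z.im| < Real.pi / 2 ∧ g r z.re < Real.cos z.im} := by
    intro h
    refine hpint (interior_maximal ?_ (U_open r) h)
    intro z hz
    exact mem_K.mpr ⟨hz.1.le, hz.2.le⟩
  have hcpos : 0 < Real.cos p.im := lt_of_lt_of_le (g_pos hr hr1 p.re) hpg
  have hi' : |p.im| < Real.pi / 2 := by
    rcases lt_or_eq_of_le hpi with h | h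
    · exact h
    · exfalso
      have hz : Real.cos p.im = 0 := by
        rcases abs_cases p.im with ⟨h1, _⟩ | ⟨h1, _⟩
        · rw [← h1, h]; exact Real.cos_pi_div_two
        · have h2 : p.im = -(Real.pi / 2) := by linarith
          rw [h2, Real.cos_neg]; exact Real.cos_pi_div_two
      linarith
  rw [mem_E]
  refine ⟨hi', ?_⟩
  by_contra hne
  exact hU ⟨hi', lt_of_le_of_ne hpg hne⟩

lemma curve_mem_E {r : ℝ} (hr : 0 < r) (hr1 : r < 1) (θ : ℝ) :
    -Complex.log (1 - (r : ℂ) * Complex.exp (((2 * Real.pi * θ : ℝ) : ℂ) * Complex.I)) ∈ E r := by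
  have hexp_re : (Complex.exp (((2 * Real.pi * θ : ℝ) : ℂ) * Complex.I)).re
      = Real.cos (2 * Real.pi * θ) := Complex.exp_ofReal_mul_I_re _
  have hexp_im : (Complex.exp (((2 * Real.pi * θ : ℝ) : ℂ) * Complex.I)).im
      = Real.sin (2 * Real.pi * θ) := Complex.exp_ofReal_mul_I_im _
  set w : ℂ := 1 - (r : ℂ) * Complex.exp (((2 * Real.pi * θ : ℝ) : ℂ) * Complex.I) with hw
  have hwre : w.re = 1 - r * Real.cos (2 * Real.pi * θ) := by
    rw [hw, Complex.sub_re, Complex.one_re, Complex.mul_re, Complex.ofReal_re,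
      Complex.ofReal_im, hexp_re, hexp_im]
    ring
  have hwim : w.im = -(r * Real.sin (2 * Real.pi * θ)) := by
    rw [hw, Complex.sub_im, Complex.one_im, Complex.mul_im, Complex.ofReal_re,
      Complex.ofReal_im, hexp_re, hexp_im]
    ring
  have hrepos : 0 < w.re := by
    rw [hwre]
    nlinarith [Real.neg_one_le_cos (2 * Real.pi * θ), Real.cos_le_one (2 * Real.pi * θ)]
  have hw0 : w ≠ 0 := by
    intro h; rw [h] at hrepos; simp at hrepos
  have habs : 0 < ‖w‖ := norm_pos_iff.mpr hw0
  have hsq : ‖w‖ ^ 2 = 1 - 2 * r * Real.cos (2 * Real.pi * θ) + r ^ 2 := by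
    rw [Complex.sq_norm, Complex.normSq_apply, hwre, hwim]
    nlinarith [Real.sin_sq_add_cos_sq (2 * Real.pi * θ)]
  have hre : (-Complex.log w).re = -Real.log ‖w‖ := by
    rw [Complex.neg_re, Complex.log_re]
  have him : (-Complex.log w).im = -w.arg := by
    rw [Complex.neg_im, Complex.log_im]
  rw [mem_E]
  constructor
  · rw [him, abs_neg]
    exact Complex.abs_arg_lt_pi_div_two_iff.mpr (Or.inl hrepos)
  · rw [hre, him, Real.cos_neg, Complex.cos_arg hw0]
    unfold g
    rw [neg_neg, Real.exp_log habs, Real.exp_neg, Real.exp_log habs,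
      eq_div_iff habs.ne']
    have key : (‖w‖ + (1 - r ^ 2) * (‖w‖)⁻¹) / 2 * ‖w‖
        = (‖w‖ ^ 2 + (1 - r ^ 2)) / 2 := by
      field_simp
    rw [key, hsq, hwre]
    ring

lemma E_subset_curve {r : ℝ} (hr : 0 < r) (hr1 : r < 1) :
    E r ⊆ (fun θ : ℝ => -Complex.log (1 - (r : ℂ) *
      Complex.exp (((2 * Real.pi * θ : ℝ) : ℂ) * Complex.I))) '' Set.Ico 0 1 := by
  intro p hp
  rw [mem_E] at hp
  obtain ⟨hpi, hpg⟩ := hp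
  set u := p.re with hu
  set v := p.im with hv
  set w : ℂ := Complex.exp (-p) with hw
  have hwre : w.re = Real.exp (-u) * Real.cos v := by
    rw [hw, Complex.exp_re, Complex.neg_re, Complex.neg_im, Real.cos_neg]
  have hwim : w.im = -(Real.exp (-u) * Real.sin v) := by
    rw [hw, Complex.exp_im, Complex.neg_re, Complex.neg_im, Real.sin_neg]; ring
  have hgval : Real.exp (-u) * Real.cos v = Real.exp (-u) * g r u := by rw [hpg]
  have hmul : Real.exp (-u) * Real.exp u = 1 := by
    rw [← Real.exp_add]; simp
  have hgexp : Real.exp (-u) * g r u = (Real.exp (-u) ^ 2 + (1 - r ^ 2)) / 2 := by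
    unfold g
    linear_combination (1 - r ^ 2) / 2 * hmul
  have hnormsq : Complex.normSq (1 - w) = r ^ 2 := by
    rw [Complex.normSq_apply]
    simp only [Complex.sub_re, Complex.sub_im, Complex.one_re, Complex.one_im]
    rw [hwre, hwim]
    have hss := Real.sin_sq_add_cos_sq v
    nlinarith [hgval, hgexp]
  have habs1w : ‖1 - w‖ = r := by
    have h := Complex.sq_norm (1 - w)
    nlinarith [norm_nonneg (1 - w)]
  set z : ℂ := (1 - w) / r with hz
  have hr0 : (r : ℂ) ≠ 0 := by
    simp only [ne_eq, Complex.ofReal_eq_zero]; exact hr.ne'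
  have habsz : ‖z‖ = 1 := by
    rw [hz, norm_div, habs1w, Complex.norm_real, Real.norm_eq_abs, abs_of_pos hr, div_self hr.ne']
  have hzexp : Complex.exp ((z.arg : ℂ) * Complex.I) = z := by
    have h := Complex.norm_mul_exp_arg_mul_I z
    rw [habsz] at h
    simpa using h
  set θ : ℝ := Int.fract (z.arg / (2 * Real.pi)) with hθ
  refine ⟨θ, ⟨Int.fract_nonneg _, Int.fract_lt_one _⟩, ?_⟩
  have hpi_ne : (2 * Real.pi) ≠ 0 := by positivity
  have hθeq : 2 * Real.pi * θ = z.arg - 2 * Real.pi * ⌊z.arg / (2 * Real.pi)⌋ := by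
    rw [hθ, Int.fract]
    field_simp
  have hn := Complex.exp_int_mul_two_pi_mul_I ⌊z.arg / (2 * Real.pi)⌋
  have hcast : (((2 * Real.pi * θ : ℝ)) : ℂ) * Complex.I
      = (z.arg : ℂ) * Complex.I
        - (⌊z.arg / (2 * Real.pi)⌋ : ℂ) * (2 * (Real.pi : ℂ) * Complex.I) := by
    rw [hθeq]; push_cast; ring
  have hexpθ : Complex.exp (((2 * Real.pi * θ : ℝ) : ℂ) * Complex.I)
      = Complex.exp ((z.arg : ℂ) * Complex.I) := by
    rw [hcast, Complex.exp_sub, hn, div_one]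
  have hwval : 1 - (r : ℂ) * Complex.exp (((2 * Real.pi * θ : ℝ) : ℂ) * Complex.I) = w := by
    rw [hexpθ, hzexp, hz]
    field_simp
    ring
  show -Complex.log (1 - (r : ℂ) * Complex.exp (((2 * Real.pi * θ : ℝ) : ℂ) * Complex.I)) = p
  have h := abs_lt.mp hpi
  have him1 : -Real.pi < (-p).im := by
    simp only [Complex.neg_im]
    have hπ : Real.pi / 2 < Real.pi := by linarith [Real.pi_pos]
    linarith [h.2]
  have him2 : (-p).im ≤ Real.pi := by
    simp only [Complex.neg_im]
    linarith [Real.pi_pos, h.1]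
  rw [hwval, hw, Complex.log_exp him1 him2, neg_neg]

end BJaux

theorem bohr_jessen_curve_convex (r : ℝ) (hr : 0 < r) (hr1 : r < 1) :
    ∃ K : Set ℂ, Convex ℝ K ∧ IsCompact K ∧
      (fun θ : ℝ => -Complex.log (1 - (r : ℂ) *
        Complex.exp (((2 * Real.pi * θ : ℝ) : ℂ) * Complex.I))) '' Set.Ico 0 1
      = frontier K := by
  refine ⟨BJaux.K r, BJaux.K_convex hr hr1, BJaux.K_compact hr hr1, ?_⟩
  apply Set.Subset.antisymm
  · rintro p ⟨θ, -, rfl⟩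
    exact BJaux.E_subset_frontier hr hr1 (BJaux.curve_mem_E hr hr1 θ)
  · intro p hp
    exact BJaux.E_subset_curve hr hr1 (BJaux.frontier_subset_E hr hr1 hp)
end

section
/- Let p be prime, σ > 0, N ≥ 2, and let χ run over the Dirichlet characters mod p. For any continuous function Φ : ℂ → ℂ and any finite set P of primes not containing p with each q ∈ P less than p, the average (p-1)^{-1} ∑_{χ mod p} Φ(-∑_{q∈P} log(1 - χ(q) q^{-σ})) converges, as p → ∞ through primes, to ∫_{T^{|P|}} Φ(-∑_{q∈P} log(1 - t_q q^{-σ})) d*t, where d*t is normalized Haar measure on the torus T^{|P|}. -/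
open MeasureTheory Complex

namespace CharEqui




variable {ι : Type*} [Fintype ι]

/-- The torus as a subset of `ι → ℂ`. -/
def T (ι : Type*) : Set (ι → ℂ) := Set.univ.pi fun _ => Metric.sphere (0:ℂ) 1

lemma mem_T {ι : Type*} {z : ι → ℂ} : z ∈ T ι ↔ ∀ i, ‖z i‖ = 1 := by
  simp [T, Set.mem_univ_pi, mem_sphere_zero_iff_norm]

lemma T_ne_zero {ι : Type*} {z : ι → ℂ} (hz : z ∈ T ι) (i : ι) : z i ≠ 0 := by
  intro h
  have := mem_T.mp hz i
  rw [h] at this; simp at this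

instance : CompactSpace (T ι) :=
  isCompact_iff_compactSpace.mp (isCompact_univ_pi fun _ => isCompact_sphere 0 1)

/-- Monomial characters on the torus. -/
noncomputable def mono (m : ι → ℤ) : C(T ι, ℂ) :=
  ⟨fun z => ∏ i, (z.1 i) ^ (m i), by
    refine continuous_finset_prod _ fun i _ => ?_
    exact ((continuous_apply i).comp continuous_subtype_val).zpow₀ _
      fun z => Or.inl (T_ne_zero z.2 i)⟩

lemma mono_apply (m : ι → ℤ) (z : T ι) : mono m z = ∏ i, (z.1 i) ^ (m i) := rfl

lemma mono_zero : (mono (fun _ => 0) : C(T ι, ℂ)) = 1 := by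
  ext z; simp [mono_apply]

lemma mono_mul (m m' : ι → ℤ) : mono m * mono m' = mono (ι := ι) (m + m') := by
  ext z
  simp only [ContinuousMap.mul_apply, mono_apply, ← Finset.prod_mul_distrib]
  refine Finset.prod_congr rfl fun i _ => ?_
  rw [Pi.add_apply, zpow_add₀ (T_ne_zero z.2 i)]

lemma star_mono (m : ι → ℤ) : star (mono m) = mono (ι := ι) (-m) := by
  ext z
  simp only [ContinuousMap.star_apply, mono_apply, star_prod, star_zpow₀]
  refine Finset.prod_congr rfl fun i _ => ?_
  have h1 : star (z.1 i) = (z.1 i)⁻¹ := by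
    refine eq_inv_of_mul_eq_one_left ?_
    rw [Complex.star_def, ← Complex.normSq_eq_conj_mul_self]
    have := mem_T.mp z.2 i
    rw [← Complex.sq_norm, this]
    norm_num
  rw [h1, inv_zpow, ← zpow_neg, Pi.neg_apply]

/-- The span of monomials. -/
noncomputable def monoSpan (ι : Type*) [Fintype ι] : Submodule ℂ C(T ι, ℂ) :=
  Submodule.span ℂ (Set.range (mono (ι := ι)))

lemma mono_mem_monoSpan (m : ι → ℤ) : mono m ∈ monoSpan ι :=
  Submodule.subset_span ⟨m, rfl⟩

lemma one_mem_monoSpan : (1 : C(T ι, ℂ)) ∈ monoSpan ι := by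
  rw [← mono_zero]; exact mono_mem_monoSpan _

lemma mul_mem_monoSpan {f g : C(T ι, ℂ)} (hf : f ∈ monoSpan ι) (hg : g ∈ monoSpan ι) :
    f * g ∈ monoSpan ι := by
  have h : monoSpan ι * monoSpan ι ≤ monoSpan ι := by
    rw [monoSpan, Submodule.span_mul_span]
    refine Submodule.span_le.mpr ?_
    rintro x ⟨a, ⟨ma, rfl⟩, b, ⟨mb, rfl⟩, rfl⟩
    exact Submodule.subset_span ⟨ma + mb, (mono_mul ma mb).symm⟩
  exact h (Submodule.mul_mem_mul hf hg)

lemma star_mem_monoSpan {f : C(T ι, ℂ)} (hf : f ∈ monoSpan ι) : star f ∈ monoSpan ι := by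
  induction hf using Submodule.span_induction with
  | mem x hx =>
    obtain ⟨m, rfl⟩ := hx
    rw [star_mono]; exact mono_mem_monoSpan _
  | zero => rw [star_zero]; exact zero_mem _
  | add x y hx hy hx' hy' => rw [star_add]; exact add_mem hx' hy'
  | smul a x hx hx' =>
    rw [star_smul]
    exact Submodule.smul_mem _ _ hx'

/-- The monomial span as star subalgebra. -/
noncomputable def monoAlg (ι : Type*) [Fintype ι] : StarSubalgebra ℂ C(T ι, ℂ) where
  toSubalgebra := (monoSpan ι).toSubalgebra one_mem_monoSpan fun _ _ => mul_mem_monoSpan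
  star_mem' := star_mem_monoSpan

lemma monoAlg_separates : (monoAlg ι).SeparatesPoints := by
  classical
  intro z w hzw
  have : ∃ i, z.1 i ≠ w.1 i := by
    by_contra h
    push_neg at h
    exact hzw (Subtype.ext (funext h))
  obtain ⟨i, hi⟩ := this
  refine ⟨_, ⟨mono (Pi.single i 1), mono_mem_monoSpan _, rfl⟩, ?_⟩
  have key : ∀ v : T ι, mono (Pi.single i 1) v = v.1 i := by
    intro v
    rw [mono_apply]
    rw [Finset.prod_eq_single i (fun j _ hj => by simp [Pi.single_eq_of_ne hj])
      (by simp)]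
    simp
  show mono (Pi.single i 1) z ≠ mono (Pi.single i 1) w
  rw [key, key]
  exact hi

lemma exists_approx (f : C(T ι, ℂ)) {ε : ℝ} (hε : 0 < ε) :
    ∃ g ∈ monoSpan ι, ‖f - g‖ < ε := by
  have hd := ContinuousMap.starSubalgebra_topologicalClosure_eq_top_of_separatesPoints
    (monoAlg ι) monoAlg_separates
  have hf : f ∈ (monoAlg ι).topologicalClosure := by rw [hd]; trivial
  have hf' : f ∈ closure ((monoAlg ι) : Set C(T ι, ℂ)) := hf
  rw [Metric.mem_closure_iff] at hf'
  obtain ⟨g, hg, hdist⟩ := hf' ε hε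
  exact ⟨g, hg, by rwa [← dist_eq_norm]⟩




/-- Type synonym for `ℝ` carrying the restricted measure on `[0,1]`. -/
def UnitInt : Type := ℝ

instance : MeasurableSpace UnitInt := inferInstanceAs (MeasurableSpace ℝ)

noncomputable instance : MeasureSpace UnitInt :=
  { volume := (volume : Measure ℝ).restrict (Set.Icc (0:ℝ) 1) }

def toR (x : UnitInt) : ℝ := x

instance : IsProbabilityMeasure (volume : Measure UnitInt) := by
  constructor
  show (volume : Measure ℝ).restrict (Set.Icc (0:ℝ) 1) Set.univ = 1
  rw [Measure.restrict_apply MeasurableSet.univ]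
  simp [Real.volume_Icc]

lemma integral_unitInt_eq (g : ℝ → ℂ) :
    ∫ x : UnitInt, g (toR x) = ∫ x in Set.Icc (0:ℝ) 1, g x := rfl

lemma restrict_cube (ι : Type*) [Fintype ι] :
    (volume : Measure (ι → ℝ)).restrict (Set.univ.pi fun _ => Set.Icc (0:ℝ) 1)
      = Measure.pi (fun _ : ι => (volume : Measure ℝ).restrict (Set.Icc 0 1)) := by
  refine (Measure.pi_eq fun s hs => ?_).symm
  rw [Measure.restrict_apply (MeasurableSet.univ_pi hs)]
  rw [← Set.pi_inter_distrib]
  rw [volume_pi_pi]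
  refine Finset.prod_congr rfl fun i _ => ?_
  rw [Measure.restrict_apply (hs i)]

lemma integral_cube_eq {ι : Type*} [Fintype ι] (f : (ι → ℝ) → ℂ) :
    (∫ θ in Set.univ.pi fun _ : ι => Set.Icc (0:ℝ) 1, f θ)
      = ∫ θ : ι → UnitInt, f (fun i => toR (θ i)) := by
  rw [restrict_cube]
  rfl

/-- One-dimensional integral of a character. -/
lemma integral_exp_Icc (n : ℤ) :
    (∫ x in Set.Icc (0:ℝ) 1, Complex.exp ((2 * (Real.pi:ℂ) * Complex.I * (n:ℂ)) * (x : ℂ)))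
      = if n = 0 then 1 else 0 := by
  rcases eq_or_ne n 0 with hn | hn
  · subst hn
    simp only [Int.cast_zero, mul_zero, zero_mul, Complex.exp_zero, if_pos rfl]
    rw [setIntegral_const]
    simp [Real.volume_Icc]
  · rw [if_neg hn]
    rw [integral_Icc_eq_integral_Ioc,
      ← intervalIntegral.integral_of_le (zero_le_one (α := ℝ))]
    have hc : (2 * (Real.pi : ℂ) * Complex.I * (n:ℂ)) ≠ 0 := by
      simp [Real.pi_ne_zero, Complex.I_ne_zero, hn]
    rw [integral_exp_mul_complex hc]
    have h1 : Complex.exp (2 * (Real.pi:ℂ) * Complex.I * (n:ℂ) * (1:ℝ)) = 1 := by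
      rw [Complex.ofReal_one, mul_one]
      rw [← Complex.exp_int_mul_two_pi_mul_I n]
      congr 1
      ring
    rw [h1]
    simp

lemma integral_cube_prod {ι : Type*} [Fintype ι] (m : ι → ℤ) :
    (∫ θ in Set.univ.pi fun _ : ι => Set.Icc (0:ℝ) 1,
        ∏ q, Complex.exp ((2 * (Real.pi:ℂ) * Complex.I * (m q : ℂ)) * (θ q : ℂ)))
      = if m = 0 then 1 else 0 := by
  rw [integral_cube_eq (fun θ => ∏ q, Complex.exp ((2 * (Real.pi:ℂ) * Complex.I * (m q : ℂ)) * (θ q : ℂ)))]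
  erw [MeasureTheory.integral_fintype_prod_eq_prod
    (f := fun q (x : UnitInt) =>
      Complex.exp ((2 * (Real.pi:ℂ) * Complex.I * (m q : ℂ)) * (toR x : ℂ)))]
  have h1 : ∀ q : ι, (∫ x : UnitInt,
      Complex.exp ((2 * (Real.pi:ℂ) * Complex.I * (m q : ℂ)) * (toR x : ℂ)))
      = if m q = 0 then 1 else 0 := by
    intro q
    rw [integral_unitInt_eq (fun x : ℝ =>
      Complex.exp ((2 * (Real.pi:ℂ) * Complex.I * (m q : ℂ)) * (x : ℂ))), integral_exp_Icc]
  simp only [h1]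
  rcases eq_or_ne m 0 with hm | hm
  · subst hm
    simp
  · rw [if_neg hm]
    obtain ⟨q0, hq0⟩ : ∃ q0, m q0 ≠ 0 := by
      by_contra h
      push_neg at h
      exact hm (funext h)
    exact Finset.prod_eq_zero (Finset.mem_univ q0) (by rw [if_neg hq0])




lemma charavg_mono (P : Finset ℕ) (hP : ∀ q ∈ P, q.Prime) (m : {x // x ∈ P} → ℤ) :
    ∃ N : ℕ, ∀ p : ℕ, p.Prime → N ≤ p → (∀ q ∈ P, q < p) →
      ((p:ℂ) - 1)⁻¹ * ∑ χ : DirichletCharacter ℂ p,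
          ∏ q : {x // x ∈ P}, (χ (((q:ℕ) : ZMod p))) ^ (m q)
        = if m = 0 then 1 else 0 := by
  classical
  set a : {x // x ∈ P} → ℕ := fun q => (m q).toNat with ha_def
  set b : {x // x ∈ P} → ℕ := fun q => (-(m q)).toNat with hb_def
  set A : ℕ := ∏ q : {x // x ∈ P}, (q : ℕ) ^ (a q) with hA_def
  set B : ℕ := ∏ q : {x // x ∈ P}, (q : ℕ) ^ (b q) with hB_def
  have hqpos : ∀ q : {x // x ∈ P}, (0:ℕ) < (q:ℕ) := fun q => (hP q q.2).pos
  have hA0 : A ≠ 0 := Finset.prod_ne_zero_iff.mpr fun q _ => pow_ne_zero _ (hqpos q).ne'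
  have hB0 : B ≠ 0 := Finset.prod_ne_zero_iff.mpr fun q _ => pow_ne_zero _ (hqpos q).ne'
  -- A = B implies m = 0
  have hABm : A = B → m = 0 := by
    intro hAB
    have key : ∀ (c : {x // x ∈ P} → ℕ) (q0 : {x // x ∈ P}),
        (∏ q : {x // x ∈ P}, (q : ℕ) ^ (c q)).factorization (q0 : ℕ) = c q0 := by
      intro c q0
      rw [Nat.factorization_prod (fun q _ => pow_ne_zero _ (hqpos q).ne')]
      rw [Finset.sum_apply']
      have : ∀ q : {x // x ∈ P}, (((q:ℕ) ^ (c q)).factorization) (q0:ℕ)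
          = if q = q0 then c q else 0 := by
        intro q
        rw [Nat.Prime.factorization_pow (hP q q.2), Finsupp.single_apply]
        congr 1
        exact propext Subtype.ext_iff.symm
      simp only [this]
      simp
    funext q0
    have h1 := key a q0
    have h2 := key b q0
    rw [← hA_def] at h1
    rw [← hB_def] at h2
    rw [hAB, h2] at h1
    have : (m q0).toNat = (-(m q0)).toNat := h1.symm
    simp only [Pi.zero_apply]
    omega
  have hmAB : m = 0 → A = B := by
    intro hm
    have : a = b := by
      funext q; simp [ha_def, hb_def, hm]
    rw [hA_def, hB_def, this]
  refine ⟨max A B + 1, fun p hp hNp hq => ?_⟩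
  haveI : Fact p.Prime := ⟨hp⟩
  have hApB : A < p ∧ B < p := by
    constructor <;> omega
  have hne0 : ∀ q : {x // x ∈ P}, ((q:ℕ) : ZMod p) ≠ 0 := by
    intro q
    rw [Ne, ZMod.natCast_eq_zero_iff]
    intro hdvd
    exact absurd (Nat.le_of_dvd (hqpos q) hdvd) (not_le.mpr (hq q q.2))
  have hunit : ∀ q : {x // x ∈ P}, IsUnit ((q:ℕ) : ZMod p) := fun q =>
    Ne.isUnit (hne0 q)
  have hchine : ∀ (χ : DirichletCharacter ℂ p) (q : {x // x ∈ P}), χ ((q:ℕ) : ZMod p) ≠ 0 := by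
    intro χ q
    have h1 : χ ((q:ℕ) : ZMod p) * χ (((q:ℕ) : ZMod p)⁻¹) = 1 := by
      rw [← map_mul, ZMod.mul_inv_of_unit _ (hunit q), map_one]
    exact left_ne_zero_of_mul_eq_one h1
  have hB' : ((B : ℕ) : ZMod p) ≠ 0 := by
    rw [Ne, ZMod.natCast_eq_zero_iff]
    intro hdvd
    have := Nat.le_of_dvd (Nat.pos_of_ne_zero hB0) hdvd
    omega
  have hBunit : IsUnit ((B : ℕ) : ZMod p) := Ne.isUnit hB'
  have hcast : ∀ c : {x // x ∈ P} → ℕ,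
      ((∏ q : {x // x ∈ P}, (q:ℕ)^(c q) : ℕ) : ZMod p)
        = ∏ q : {x // x ∈ P}, ((q:ℕ) : ZMod p)^(c q) := by
    intro c
    push_cast
    rfl
  have hterm : ∀ χ : DirichletCharacter ℂ p,
      (∏ q : {x // x ∈ P}, (χ ((q:ℕ) : ZMod p)) ^ (m q))
        = χ ((((B : ℕ) : ZMod p))⁻¹) * χ ((A : ℕ) : ZMod p) := by
    intro χ
    have hsplit : ∀ q : {x // x ∈ P},
        (χ ((q:ℕ) : ZMod p)) ^ (m q)
          = (χ ((q:ℕ) : ZMod p)) ^ (a q) * ((χ ((q:ℕ) : ZMod p)) ^ (b q))⁻¹ := by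
      intro q
      have hm' : m q = (a q : ℤ) - (b q : ℤ) := by
        simp only [ha_def, hb_def]
        omega
      rw [hm', zpow_sub₀ (hchine χ q), zpow_natCast, zpow_natCast]
      exact div_eq_mul_inv _ _
    rw [Finset.prod_congr rfl fun q _ => hsplit q, Finset.prod_mul_distrib,
      Finset.prod_inv_distrib]
    have hprodc : ∀ c : {x // x ∈ P} → ℕ,
        (∏ q : {x // x ∈ P}, (χ ((q:ℕ) : ZMod p)) ^ (c q))
          = χ ((∏ q : {x // x ∈ P}, (q:ℕ)^(c q) : ℕ) : ZMod p) := by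
      intro c
      rw [hcast c, map_prod]
      simp only [map_pow]
    rw [hprodc a, hprodc b, ← hA_def, ← hB_def]
    have hBinv : (χ ((B : ℕ) : ZMod p))⁻¹ = χ ((((B : ℕ) : ZMod p))⁻¹) := by
      refine (inv_eq_of_mul_eq_one_left ?_)
      rw [← map_mul, ZMod.inv_mul_of_unit _ hBunit, map_one]
    rw [hBinv, mul_comm]
  haveI : NeZero p := ⟨hp.ne_zero⟩
  haveI : NeZero ((Monoid.exponent (ZMod p)ˣ : ℕ) : ℂ) :=
    ⟨Nat.cast_ne_zero.mpr Monoid.exponent_ne_zero_of_finite⟩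
  have hsum : (∑ χ : DirichletCharacter ℂ p,
      ∏ q : {x // x ∈ P}, (χ (((q:ℕ) : ZMod p))) ^ (m q))
      = if ((B:ℕ) : ZMod p) = ((A:ℕ) : ZMod p) then (p.totient : ℂ) else 0 := by
    rw [Finset.sum_congr rfl fun χ _ => hterm χ]
    exact DirichletCharacter.sum_char_inv_mul_char_eq ℂ hBunit _
  have hiff : (((B:ℕ) : ZMod p) = ((A:ℕ) : ZMod p)) ↔ m = 0 := by
    constructor
    · intro h
      refine hABm ?_
      have := (ZMod.natCast_eq_natCast_iff _ _ _).mp h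
      exact (Nat.ModEq.eq_of_lt_of_lt this hApB.2 hApB.1).symm
    · intro hm
      rw [hmAB hm]
  rw [hsum]
  by_cases hm : m = 0
  · rw [if_pos (hiff.mpr hm), if_pos hm]
    rw [Nat.totient_prime hp]
    have hcast2 : ((p - 1 : ℕ) : ℂ) = (p : ℂ) - 1 := by
      have : 1 ≤ p := hp.one_lt.le
      push_cast [this]
      ring
    rw [hcast2]
    refine inv_mul_cancel₀ ?_
    refine sub_ne_zero.mpr ?_
    intro h
    have : p = 1 := by exact_mod_cast h
    exact hp.one_lt.ne' this
  · rw [if_neg (fun h => hm (hiff.mp h)), if_neg hm, mul_zero]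



end CharEqui

open MeasureTheory CharEqui Complex

theorem character_average_equidistribution (σ : ℝ) (hσ : 0 < σ) (P : Finset ℕ)
    (hP : ∀ q ∈ P, q.Prime) (Φ : ℂ → ℂ) (hΦ : Continuous Φ) :
    ∀ ε > (0 : ℝ), ∃ N : ℕ, ∀ p : ℕ, ∀ _ : Fact p.Prime, N ≤ p →
      (∀ q ∈ P, q < p) →
      ‖((p : ℂ) - 1)⁻¹ * ∑ χ : DirichletCharacter ℂ p,
          Φ (-∑ q : P, Complex.log (1 - χ ((q : ℕ) : ZMod p) *
            ((((q : ℕ) : ℝ) ^ (-σ) : ℝ) : ℂ)))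
        - ∫ θ in Set.univ.pi (fun _ : P => Set.Icc (0:ℝ) 1),
            Φ (-∑ q : P, Complex.log (1 -
              Complex.exp (((2 * Real.pi * θ q : ℝ) : ℂ) * Complex.I) *
              ((((q : ℕ) : ℝ) ^ (-σ) : ℝ) : ℂ)))‖ < ε := by
  classical
  intro ε hε
  set ι := {x // x ∈ P}
  -- basic facts about q^{-σ}
  have hr0 : ∀ q : ι, (0:ℝ) ≤ ((q:ℕ):ℝ) ^ (-σ) := fun q =>
    Real.rpow_nonneg (Nat.cast_nonneg _) _
  have hr1 : ∀ q : ι, ((q:ℕ):ℝ) ^ (-σ) < 1 := by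
    intro q
    refine Real.rpow_lt_one_of_one_lt_of_neg ?_ (by linarith)
    exact_mod_cast (hP q q.2).one_lt
  -- the membership in the slit plane
  have hslit : ∀ (z : ℂ) (q : ι), ‖z‖ = 1 → (1 - z * ((((q:ℕ):ℝ) ^ (-σ) : ℝ) : ℂ))
      ∈ Complex.slitPlane := by
    intro z q hz
    refine Or.inl ?_
    have h1 : (1 - z * ((((q:ℕ):ℝ) ^ (-σ) : ℝ) : ℂ)).re
        = 1 - (z * ((((q:ℕ):ℝ) ^ (-σ) : ℝ) : ℂ)).re := by simp
    rw [h1]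
    have h2 : (z * ((((q:ℕ):ℝ) ^ (-σ) : ℝ) : ℂ)).re
        ≤ ‖z * ((((q:ℕ):ℝ) ^ (-σ) : ℝ) : ℂ)‖ := by
      exact Complex.re_le_norm _
    have h3 : ‖z * ((((q:ℕ):ℝ) ^ (-σ) : ℝ) : ℂ)‖ = ((q:ℕ):ℝ) ^ (-σ) := by
      rw [norm_mul, hz, one_mul, Complex.norm_real, Real.norm_eq_abs,
        _root_.abs_of_nonneg (hr0 q)]
    have := hr1 q
    rw [h3] at h2
    linarith
  -- the main continuous function on the torus
  set G : C(T ι, ℂ) := ⟨fun z => Φ (-∑ q : ι, Complex.log (1 - z.1 q *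
      ((((q:ℕ):ℝ) ^ (-σ) : ℝ) : ℂ))), by
    refine hΦ.comp ?_
    refine Continuous.neg ?_
    refine continuous_finset_sum _ fun q _ => ?_
    rw [continuous_iff_continuousAt]
    intro z0
    refine ContinuousAt.clog ?_ (hslit _ q (mem_T.mp z0.2 q))
    exact (continuous_const.sub (((continuous_apply q).comp
        continuous_subtype_val).mul continuous_const)).continuousAt⟩ with hG_def
  -- the exponential parametrization
  have hEmem : ∀ θ : ι → ℝ, (fun q : ι =>
      Complex.exp (((2 * Real.pi * θ q : ℝ) : ℂ) * Complex.I)) ∈ T ι := by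
    intro θ
    rw [mem_T]
    intro q
    rw [Complex.norm_exp]
    simp
  set ET : (ι → ℝ) → T ι := fun θ => ⟨_, hEmem θ⟩ with hET_def
  have hETcont : Continuous ET := by
    refine Continuous.subtype_mk ?_ _
    refine continuous_pi fun q => ?_
    refine Complex.continuous_exp.comp ?_
    exact (Complex.continuous_ofReal.comp
      (continuous_const.mul (continuous_apply q))).mul continuous_const
  -- the character parametrization
  have hψmem : ∀ (p : ℕ) (hp : p.Prime) (hq : ∀ q ∈ P, q < p)
      (χ : DirichletCharacter ℂ p),
      (fun q : ι => χ ((q:ℕ) : ZMod p)) ∈ T ι := by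
    intro p hp hq χ
    haveI : Fact p.Prime := ⟨hp⟩
    rw [mem_T]
    intro q
    have hne0 : ((q:ℕ) : ZMod p) ≠ 0 := by
      rw [Ne, ZMod.natCast_eq_zero_iff]
      intro hdvd
      exact absurd (Nat.le_of_dvd (hP q q.2).pos hdvd) (not_le.mpr (hq q q.2))
    have hpow : (χ ((q:ℕ) : ZMod p)) ^ (p - 1) = 1 := by
      rw [← map_pow, ZMod.pow_card_sub_one_eq_one hne0, map_one]
    exact Complex.norm_eq_one_of_pow_eq_one hpow (Nat.sub_ne_zero_of_lt hp.one_lt)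
  set ψ : ∀ (p : ℕ), p.Prime → (∀ q ∈ P, q < p) →
      DirichletCharacter ℂ p → T ι :=
    fun p hp hq χ => ⟨_, hψmem p hp hq χ⟩ with hψ_def
  -- cube facts
  set cube : Set (ι → ℝ) := Set.univ.pi fun _ : ι => Set.Icc (0:ℝ) 1 with hcube_def
  have hcube_compact : IsCompact cube := isCompact_univ_pi fun _ => isCompact_Icc
  have hcube_vol : volume cube = 1 := by
    rw [hcube_def, volume_pi_pi]
    simp [Real.volume_Icc]
  have hInt : ∀ f : C(T ι, ℂ), IntegrableOn (fun θ => f (ET θ)) cube volume :=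
    fun f => ((f.continuous.comp hETcont).continuousOn).integrableOn_compact hcube_compact
  -- the key identity for elements of the monomial span
  have key : ∀ g ∈ monoSpan ι, ∃ N : ℕ, ∀ (p : ℕ) (hp : p.Prime), N ≤ p →
      ∀ (hq : ∀ q ∈ P, q < p),
      ((p:ℂ) - 1)⁻¹ * ∑ χ : DirichletCharacter ℂ p, g (ψ p hp hq χ)
        = ∫ θ in cube, g (ET θ) := by
    intro g hg
    induction hg using Submodule.span_induction with
    | mem x hx =>
      obtain ⟨m, rfl⟩ := hx
      obtain ⟨N, hN⟩ := charavg_mono P hP m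
      refine ⟨N, fun p hp hNp hq => ?_⟩
      have hmono : ∀ χ : DirichletCharacter ℂ p,
          mono m (ψ p hp hq χ) = ∏ q : ι, (χ ((q:ℕ) : ZMod p)) ^ (m q) := fun χ => rfl
      have hint : ∀ θ : ι → ℝ, mono m (ET θ)
          = ∏ q : ι, Complex.exp ((2 * (Real.pi:ℂ) * Complex.I * (m q : ℂ)) * ((θ q : ℝ) : ℂ)) := by
        intro θ
        rw [mono_apply]
        refine Finset.prod_congr rfl fun q _ => ?_
        show (Complex.exp (((2 * Real.pi * θ q : ℝ) : ℂ) * Complex.I)) ^ (m q) = _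
        rw [← Complex.exp_int_mul]
        congr 1
        push_cast
        ring
      simp only [hmono]
      rw [hN p hp hNp hq]
      simp only [hint]
      rw [integral_cube_prod m]
    | zero =>
      refine ⟨0, fun p hp hNp hq => ?_⟩
      simp
    | add x y hx hy hx' hy' =>
      obtain ⟨N1, h1⟩ := hx'
      obtain ⟨N2, h2⟩ := hy'
      refine ⟨max N1 N2, fun p hp hNp hq => ?_⟩
      simp only [ContinuousMap.add_apply]
      rw [Finset.sum_add_distrib, mul_add, integral_add (hInt x) (hInt y),
        h1 p hp (le_trans (le_max_left _ _) hNp) hq,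
        h2 p hp (le_trans (le_max_right _ _) hNp) hq]
    | smul c x hx hx' =>
      obtain ⟨N, h⟩ := hx'
      refine ⟨N, fun p hp hNp hq => ?_⟩
      simp only [ContinuousMap.smul_apply, smul_eq_mul]
      rw [← Finset.mul_sum, integral_const_mul, ← h p hp hNp hq]
      ring
  -- pick a good approximation
  obtain ⟨g, hg, hgG⟩ := exists_approx G (show (0:ℝ) < ε/3 by linarith)
  obtain ⟨N0, hN0⟩ := key g hg
  refine ⟨max N0 2, fun p hpF hNp hq => ?_⟩
  have hp : p.Prime := hpF.out
  have hN0p : N0 ≤ p := le_trans (le_max_left _ _) hNp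
  have hp2 : 2 ≤ p := le_trans (le_max_right _ _) hNp
  -- identify the two parts of the statement
  have hcharid : (∑ χ : DirichletCharacter ℂ p,
      Φ (-∑ q : P, Complex.log (1 - χ ((q : ℕ) : ZMod p) *
        ((((q : ℕ) : ℝ) ^ (-σ) : ℝ) : ℂ))))
      = ∑ χ : DirichletCharacter ℂ p, G (ψ p hp hq χ) := rfl
  have hintid : (∫ θ in Set.univ.pi (fun _ : P => Set.Icc (0:ℝ) 1),
      Φ (-∑ q : P, Complex.log (1 -
        Complex.exp (((2 * Real.pi * θ q : ℝ) : ℂ) * Complex.I) *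
        ((((q : ℕ) : ℝ) ^ (-σ) : ℝ) : ℂ))))
      = ∫ θ in cube, G (ET θ) := rfl
  rw [hcharid, hintid]
  -- norms of averages are bounded by sup norms
  have hcard : (Fintype.card (DirichletCharacter ℂ p) : ℕ) = p - 1 := by
    haveI : Fact p.Prime := hpF
    haveI : NeZero p := ⟨hp.ne_zero⟩
    haveI : NeZero ((Monoid.exponent (ZMod p)ˣ : ℕ) : ℂ) :=
      ⟨Nat.cast_ne_zero.mpr Monoid.exponent_ne_zero_of_finite⟩
    rw [← Nat.card_eq_fintype_card,
      DirichletCharacter.card_eq_totient_of_hasEnoughRootsOfUnity, Nat.totient_prime hp]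
  have hpC : ((p:ℂ) - 1) = ((p - 1 : ℕ) : ℂ) := by
    have : 1 ≤ p := hp.one_lt.le
    push_cast [this]
    ring
  have havg_bound : ∀ D : C(T ι, ℂ),
      ‖((p:ℂ) - 1)⁻¹ * ∑ χ : DirichletCharacter ℂ p, D (ψ p hp hq χ)‖ ≤ ‖D‖ := by
    intro D
    rw [norm_mul, norm_inv, hpC, Complex.norm_natCast]
    have hsum : ‖∑ χ : DirichletCharacter ℂ p, D (ψ p hp hq χ)‖
        ≤ (p - 1 : ℕ) * ‖D‖ := by
      refine le_trans (norm_sum_le _ _) ?_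
      rw [← hcard]
      calc ∑ χ : DirichletCharacter ℂ p, ‖D (ψ p hp hq χ)‖
          ≤ ∑ _χ : DirichletCharacter ℂ p, ‖D‖ :=
            Finset.sum_le_sum fun χ _ => D.norm_coe_le_norm _
        _ = (Fintype.card (DirichletCharacter ℂ p) : ℕ) * ‖D‖ := by
            rw [Finset.sum_const, Finset.card_univ, nsmul_eq_mul]
    have hpos : (0:ℝ) < ((p - 1 : ℕ) : ℝ) := by
      have : 1 ≤ p - 1 := by omega
      exact_mod_cast Nat.lt_of_lt_of_le Nat.zero_lt_one this
    calc (((p - 1 : ℕ) : ℝ))⁻¹ * ‖∑ χ : DirichletCharacter ℂ p, D (ψ p hp hq χ)‖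
        ≤ (((p - 1 : ℕ) : ℝ))⁻¹ * ((p - 1 : ℕ) * ‖D‖) := by
          refine mul_le_mul_of_nonneg_left hsum (by positivity)
      _ = ‖D‖ := by
          rw [← mul_assoc, inv_mul_cancel₀ hpos.ne', one_mul]
  have hint_bound : ∀ D : C(T ι, ℂ),
      ‖∫ θ in cube, D (ET θ)‖ ≤ ‖D‖ := by
    intro D
    have := norm_setIntegral_le_of_norm_le_const (μ := volume) (s := cube)
      (f := fun θ => D (ET θ)) (C := ‖D‖)
      (by rw [hcube_vol]; exact ENNReal.one_lt_top)
      (fun θ _ => D.norm_coe_le_norm _)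
    rwa [measureReal_def, hcube_vol, ENNReal.toReal_one, mul_one] at this
  -- assemble
  have hmid := hN0 p hp hN0p hq
  have h1 : ((p:ℂ) - 1)⁻¹ * (∑ χ : DirichletCharacter ℂ p, G (ψ p hp hq χ))
      - ((p:ℂ) - 1)⁻¹ * (∑ χ : DirichletCharacter ℂ p, g (ψ p hp hq χ))
      = ((p:ℂ) - 1)⁻¹ * ∑ χ : DirichletCharacter ℂ p, (G - g) (ψ p hp hq χ) := by
    simp only [ContinuousMap.sub_apply]
    rw [Finset.sum_sub_distrib, mul_sub]
  have h2 : (∫ θ in cube, g (ET θ)) - (∫ θ in cube, G (ET θ))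
      = ∫ θ in cube, (g - G) (ET θ) := by
    simp only [ContinuousMap.sub_apply]
    rw [integral_sub (hInt g) (hInt G)]
  have hsplit : ((p:ℂ) - 1)⁻¹ * (∑ χ : DirichletCharacter ℂ p, G (ψ p hp hq χ))
      - (∫ θ in cube, G (ET θ))
      = (((p:ℂ) - 1)⁻¹ * (∑ χ : DirichletCharacter ℂ p, G (ψ p hp hq χ))
          - ((p:ℂ) - 1)⁻¹ * (∑ χ : DirichletCharacter ℂ p, g (ψ p hp hq χ)))
        + ((∫ θ in cube, g (ET θ)) - (∫ θ in cube, G (ET θ))) := by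
    rw [hmid]
    ring
  rw [hsplit]
  calc ‖_ + _‖ ≤ ‖((p:ℂ) - 1)⁻¹ * (∑ χ : DirichletCharacter ℂ p, G (ψ p hp hq χ))
          - ((p:ℂ) - 1)⁻¹ * (∑ χ : DirichletCharacter ℂ p, g (ψ p hp hq χ))‖
        + ‖(∫ θ in cube, g (ET θ)) - (∫ θ in cube, G (ET θ))‖ := norm_add_le _ _
    _ < ε/3 + ε/3 := by
        refine add_lt_add_of_lt_of_lt ?_ ?_
        · rw [h1]
          exact lt_of_le_of_lt (havg_bound (G - g)) hgG
        · rw [h2]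
          refine lt_of_le_of_lt (hint_bound (g - G)) ?_
          rwa [← norm_neg, neg_sub]
    _ ≤ ε := by linarith
end
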